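/- (Difference between the discrete Q-function and the value function is O(h).) Let 𝒳, 𝒜 be finite sets, γ > 0 and 0 < h ≤ 1. Let V : 𝒳 → ℝ with |V(x)| ≤ M for all x, let f : 𝒳 × 𝒜 → ℝ with |f(x,a)| ≤ F, and for each (x,a) let p_h(·|x,a) be a probability distribution on 𝒳 satisfying the generator bound Σ_{x'} |p_h(x'|x,a) − 𝟙{x' = x}| ≤ C h for a constant C ≥ 0. Define Q(x,a) = h f(x,a) + e^{−γh} Σ_{x'} p_h(x'|x,a) V(x'). Then for every (x,a), |Q(x,a) − V(x)| ≤ (F + C M + γ M) h. -/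
import Mathlib


open Finset

/-- A probability distribution on a finite set. -/
def IsProb {𝒳 : Type*} [Fintype 𝒳] (μ : 𝒳 → ℝ) : Prop :=
  (∀ x, 0 ≤ μ x) ∧ ∑ x, μ x = 1

/-- The difference between the discrete-time Q-function and the value function is `O(h)`:
`|Q(x,a) − V(x)| ≤ (F + C M + γ M) h`. -/
theorem Q_minus_V_order_h {𝒳 𝒜 : Type*} [Fintype 𝒳] [Fintype 𝒜] [DecidableEq 𝒳]
    (γ h M F C : ℝ) (hγ : 0 < γ) (hh : 0 < h ∧ h ≤ 1) (hC : 0 ≤ C)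
    (V : 𝒳 → ℝ) (hV : ∀ x, |V x| ≤ M)
    (f : 𝒳 → 𝒜 → ℝ) (hf : ∀ x a, |f x a| ≤ F)
    (p : 𝒳 → 𝒳 → 𝒜 → ℝ)
    (hp : ∀ x a, IsProb (fun x' => p x' x a))
    (hgen : ∀ x a, ∑ x', |p x' x a - (if x' = x then (1 : ℝ) else 0)| ≤ C * h)
    (Q : 𝒳 → 𝒜 → ℝ)
    (hQ : ∀ x a, Q x a = h * f x a + Real.exp (-γ * h) * ∑ x', p x' x a * V x') :
    ∀ x a, |Q x a - V x| ≤ (F + C * M + γ * M) * h := by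
  intro x a
  obtain ⟨hh0, hh1⟩ := hh
  have hM : 0 ≤ M := le_trans (abs_nonneg _) (hV x)
  set E := Real.exp (-γ * h) with hE
  have hE0 : 0 ≤ E := Real.exp_nonneg _
  have hE1 : E ≤ 1 := by
    rw [hE]
    apply Real.exp_le_one_iff.mpr
    nlinarith
  have hEγ : 1 - E ≤ γ * h := by
    have := Real.add_one_le_exp (-γ * h)
    nlinarith
  set S := ∑ x', (p x' x a - (if x' = x then (1 : ℝ) else 0)) * V x' with hSdef
  have hS : |S| ≤ C * M * h := by
    calc |S| ≤ ∑ x', |(p x' x a - (if x' = x then (1 : ℝ) else 0)) * V x'| :=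
          Finset.abs_sum_le_sum_abs _ _
      _ ≤ ∑ x', |p x' x a - (if x' = x then (1 : ℝ) else 0)| * M := by
          apply Finset.sum_le_sum
          intro i _
          rw [abs_mul]
          exact mul_le_mul_of_nonneg_left (hV i) (abs_nonneg _)
      _ = (∑ x', |p x' x a - (if x' = x then (1 : ℝ) else 0)|) * M := by
          rw [Finset.sum_mul]
      _ ≤ C * h * M := mul_le_mul_of_nonneg_right (hgen x a) hM
      _ = C * M * h := by ring
  have hsum : ∑ x', p x' x a * V x' = V x + S := by
    rw [hSdef]
    have : ∑ x', (if x' = x then (1 : ℝ) else 0) * V x' = V x := by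
      simp
    rw [← this]
    rw [← Finset.sum_add_distrib]
    congr 1; ext i; ring
  have hQV : Q x a - V x = h * f x a + E * S + (E - 1) * V x := by
    rw [hQ x a, hsum]; ring
  rw [hQV]
  have h1 : |h * f x a| ≤ h * F := by
    rw [abs_mul, abs_of_pos hh0]
    exact mul_le_mul_of_nonneg_left (hf x a) hh0.le
  have h2 : |E * S| ≤ C * M * h := by
    rw [abs_mul, abs_of_nonneg hE0]
    calc E * |S| ≤ 1 * |S| := mul_le_mul_of_nonneg_right hE1 (abs_nonneg _)
      _ = |S| := one_mul _
      _ ≤ C * M * h := hS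
  have h3 : |(E - 1) * V x| ≤ γ * h * M := by
    rw [abs_mul]
    have : |E - 1| ≤ γ * h := by
      rw [abs_sub_comm, abs_of_nonneg (by linarith)]
      linarith
    calc |E - 1| * |V x| ≤ (γ * h) * M :=
        mul_le_mul this (hV x) (abs_nonneg _) (by positivity)
      _ = γ * h * M := rfl
  calc |h * f x a + E * S + (E - 1) * V x|
      ≤ |h * f x a + E * S| + |(E - 1) * V x| := abs_add_le _ _
    _ ≤ |h * f x a| + |E * S| + |(E - 1) * V x| := by
        linarith [abs_add_le (h * f x a) (E * S)]
    _ ≤ h * F + C * M * h + γ * h * M := by linarith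
    _ = (F + C * M + γ * M) * h := by ring
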